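/- Let (G,w) be a finite connected edge-weighted graph. A subgraph X of G is a minimum spanning tree of (G,w) if and only if (1) the quasi-flat zones hierarchy of X for w equals that of G, and (2) X is minimal for this property: every subgraph Y of X whose quasi-flat zones hierarchy for w equals that of G satisfies Y = X. -/

import Mathlib

open SimpleGraph

variable {V : Type*}

/-- `P'` refines `P`: every region of `P'` is contained in a region of `P`. -/
def Refines (P' P : Set (Set V)) : Prop := ∀ R ∈ P', ∃ S ∈ P, R ⊆ S

/-- `x` and `y` lie in the same region of `P`. -/
def SameRegion (P : Set (Set V)) (x y : V) : Prop := ∃ R ∈ P, x ∈ R ∧ y ∈ R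

/-- The cut of a partition `P` for the graph `G`. -/
def cutOf (G : SimpleGraph V) (P : Set (Set V)) : Set (Sym2 V) :=
  {e | e ∈ G.edgeSet ∧ ∀ x y : V, e = s(x, y) → ¬ SameRegion P x y}

/-- The `lam`-level partition of a subgraph `X`: connected components of the
`lam`-level graph `(V(X), {u ∈ E(X) : w u < lam})`, as a set of regions. -/
def levelPartition {G : SimpleGraph V} (X : G.Subgraph) {α : Type*} [LT α]
    (w : Sym2 V → α) (lam : α) : Set (Set V) :=
  {S | ∃ x ∈ X.verts,
    S = {y | Relation.ReflTransGen (fun a b => X.Adj a b ∧ w s(a, b) < lam) x y}}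

/-- The `lam`-level partition of the graph `G` itself (quasi-flat zones at level `lam`). -/
def qfz (G : SimpleGraph V) (w : Sym2 V → ℕ) (lam : ℕ) : Set (Set V) :=
  {S | ∃ x : V,
    S = {y | Relation.ReflTransGen (fun a b => G.Adj a b ∧ w s(a, b) < lam) x y}}

/-- `(P₀, …, P_l)` is a complete hierarchy on `V`. -/
def IsCompleteHierarchy (P : ℕ → Set (Set V)) (l : ℕ) : Prop :=
  (∀ i ≤ l, Setoid.IsPartition (P i)) ∧
  (∀ i, 1 ≤ i → i ≤ l → Refines (P (i - 1)) (P i)) ∧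
  (P 0 = {S | ∃ x : V, S = {x}}) ∧
  (P l = {Set.univ})

/-- A complete hierarchy all of whose regions induce connected subgraphs of `G`. -/
def IsConnectedHierarchy (G : SimpleGraph V) (P : ℕ → Set (Set V)) (l : ℕ) : Prop :=
  IsCompleteHierarchy P l ∧ ∀ i ≤ l, ∀ S ∈ P i, (G.induce S).Connected

/-- The saliency map of the hierarchy `(P₀, …, P_l)`:
`Φ(H)(u) = max {lam ≤ l : u ∈ φ(P lam)}`. -/
noncomputable def saliency (G : SimpleGraph V) (P : ℕ → Set (Set V)) (l : ℕ)
    (e : Sym2 V) : ℕ :=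
  sSup {lam | lam ≤ l ∧ e ∈ cutOf G (P lam)}

/-- `w` is a saliency map on `G`: the saliency map of some connected complete
hierarchy of depth `|E|`. -/
def IsSaliencyMap (G : SimpleGraph V) [Fintype G.edgeSet] (w : Sym2 V → ℕ) : Prop :=
  ∃ P : ℕ → Set (Set V), IsConnectedHierarchy G P G.edgeFinset.card ∧
    ∀ e ∈ G.edgeSet, w e = saliency G P G.edgeFinset.card e

/-- Total weight of a subgraph. -/
noncomputable def sgWeight [Fintype V] {G : SimpleGraph V} {α : Type*}
    [AddCommMonoid α] (X : G.Subgraph) (w : Sym2 V → α) : α :=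
  ∑ e ∈ (Set.toFinite X.edgeSet).toFinset, w e

/-- `X` is a minimum spanning tree of `(G, w)`. -/
def IsMST [Fintype V] {G : SimpleGraph V} {α : Type*} [AddCommMonoid α] [Preorder α]
    (X : G.Subgraph) (w : Sym2 V → α) : Prop :=
  X.verts = Set.univ ∧ X.Connected ∧
  ∀ Y : G.Subgraph, Y.verts = Set.univ → Y.Connected → sgWeight X w ≤ sgWeight Y w

/-! ### Auxiliary development for the MST theorem -/

section MSTAux

open Relation

variable {G : SimpleGraph V}

/-- The level-`lam` relation of a subgraph. -/
def srel (X : G.Subgraph) (w : Sym2 V → ℕ) (lam : ℕ) : V → V → Prop :=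
  fun a b => X.Adj a b ∧ w s(a, b) < lam

lemma srel_symm (X : G.Subgraph) (w : Sym2 V → ℕ) (lam : ℕ) : Symmetric (srel X w lam) := by
  rintro a b ⟨h1, h2⟩
  exact ⟨h1.symm, by rwa [Sym2.eq_swap]⟩

lemma rtg_lift {α : Type*} {r s : α → α → Prop} (h : ∀ a b, r a b → ReflTransGen s a b)
    {a b : α} (hr : ReflTransGen r a b) : ReflTransGen s a b := by
  induction hr with
  | refl => exact .refl
  | tail _ hbc ih => exact ih.trans (h _ _ hbc)

lemma srel_mono_lam {X : G.Subgraph} {w : Sym2 V → ℕ} {lam lam' : ℕ} (h : lam ≤ lam') :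
    ∀ a b, srel X w lam a b → srel X w lam' a b :=
  fun _ _ ⟨h1, h2⟩ => ⟨h1, lt_of_lt_of_le h2 h⟩

lemma srel_le_top {X : G.Subgraph} {w : Sym2 V → ℕ} {lam : ℕ} :
    ∀ a b, srel X w lam a b → srel (⊤ : G.Subgraph) w lam a b :=
  fun _ _ ⟨h1, h2⟩ => ⟨by simpa using X.adj_sub h1, h2⟩

/-- The class of `x` for the reflexive-transitive closure of `r`. -/
def cls (r : V → V → Prop) (x : V) : Set V := {y | ReflTransGen r x y}

lemma cls_eq_of_mem {r : V → V → Prop} (hsym : Symmetric r) {x z : V}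
    (h : z ∈ cls r x) : cls r x = cls r z := by
  ext y
  exact ⟨fun hy => ((@ReflTransGen.symmetric _ _ ⟨fun _ _ h => hsym h⟩).symm _ _ h).trans hy, fun hy => h.trans hy⟩

lemma levelPartition_def (X : G.Subgraph) (w : Sym2 V → ℕ) (lam : ℕ) :
    levelPartition X w lam = {S | ∃ x ∈ X.verts, S = cls (srel X w lam) x} := rfl

/-- Level partitions agree iff `X` spans and has the same level connectivity. -/
lemma levelPartition_eq_iff {X : G.Subgraph} {w : Sym2 V → ℕ} {lam : ℕ} :
    levelPartition X w lam = levelPartition (⊤ : G.Subgraph) w lam ↔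
      (X.verts = Set.univ ∧ ∀ x y : V, ReflTransGen (srel (⊤ : G.Subgraph) w lam) x y →
        ReflTransGen (srel X w lam) x y) := by
  rw [levelPartition_def, levelPartition_def]
  constructor
  · intro h
    have key : ∀ v : V, ∃ z ∈ X.verts, cls (srel (⊤ : G.Subgraph) w lam) v = cls (srel X w lam) z := by
      intro v
      have hv : cls (srel (⊤ : G.Subgraph) w lam) v ∈
          {S | ∃ x ∈ (⊤ : G.Subgraph).verts, S = cls (srel (⊤ : G.Subgraph) w lam) x} :=
        ⟨v, by simp, rfl⟩
      rw [← h] at hv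
      obtain ⟨z, hz, hcls⟩ := hv
      exact ⟨z, hz, hcls⟩
    have hverts : X.verts = Set.univ := by
      ext v
      simp only [Set.mem_univ, iff_true]
      obtain ⟨z, hz, hcls⟩ := key v
      have hvz : v ∈ cls (srel X w lam) z := by
        rw [← hcls]; exact ReflTransGen.refl
      rcases (hvz : ReflTransGen _ z v).cases_tail with h' | ⟨c, _, hc⟩
      · rwa [h']
      · exact hc.1.snd_mem
    refine ⟨hverts, fun x y hxy => ?_⟩
    obtain ⟨z, _, hcls⟩ := key x
    have hx : ReflTransGen (srel X w lam) z x := by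
      have : x ∈ cls (srel X w lam) z := by rw [← hcls]; exact ReflTransGen.refl
      exact this
    have hy : ReflTransGen (srel X w lam) z y := by
      have : y ∈ cls (srel X w lam) z := by rw [← hcls]; exact hxy
      exact this
    exact ((@ReflTransGen.symmetric _ _ ⟨fun _ _ h => srel_symm X w lam h⟩).symm _ _ hx).trans hy
  · rintro ⟨hv, himp⟩
    have hcl : ∀ x : V, cls (srel X w lam) x = cls (srel (⊤ : G.Subgraph) w lam) x := by
      intro x
      ext y
      exact ⟨fun hy => rtg_lift (fun a b hab => ReflTransGen.single (srel_le_top a b hab)) hy,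
        fun hy => himp x y hy⟩
    ext S
    constructor
    · rintro ⟨x, _, rfl⟩
      exact ⟨x, by simp, (hcl x).symm ▸ (hcl x)⟩
    · rintro ⟨x, _, rfl⟩
      exact ⟨x, by rw [hv]; trivial, (hcl x).symm⟩

/-- Crossing lemma: a chain from inside `S` to outside `S` has a crossing step whose
suffix stays outside `S`. -/
lemma crossing {r : V → V → Prop} {S : Set V} {x y : V} (h : ReflTransGen r x y)
    (hx : x ∈ S) (hy : y ∉ S) :
    ∃ a b, a ∈ S ∧ b ∉ S ∧ r a b ∧
      ReflTransGen (fun p q => r p q ∧ p ∉ S ∧ q ∉ S) b y := by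
  induction h with
  | refl => exact absurd hx hy
  | @tail b c hxb hbc ih =>
    by_cases hb : b ∈ S
    · exact ⟨b, c, hb, hy, hbc, ReflTransGen.refl⟩
    · obtain ⟨a, b', ha, hb', hab, hsuf⟩ := ih hb
      exact ⟨a, b', ha, hb', hab, hsuf.tail ⟨hbc, hb, hy⟩⟩

lemma rtg_coe {X : G.Subgraph} {u v : V} (h : ReflTransGen X.Adj u v) :
    ∀ (hu : u ∈ X.verts) (hv : v ∈ X.verts), X.coe.Reachable ⟨u, hu⟩ ⟨v, hv⟩ := by
  induction h with
  | refl => intro hu hv; rfl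
  | @tail b c hub hbc ih =>
    intro hu hv
    exact (ih hu hbc.fst_mem).trans (SimpleGraph.Adj.reachable (by simpa using hbc))

lemma subgraph_connected_of_rtg [Nonempty V] {X : G.Subgraph} (hv : X.verts = Set.univ)
    (h : ∀ u v : V, ReflTransGen X.Adj u v) : X.Connected := by
  rw [SimpleGraph.Subgraph.connected_iff]
  refine ⟨⟨?_⟩, by rw [hv]; exact Set.univ_nonempty⟩
  rintro ⟨u, hu⟩ ⟨v, hvm⟩
  exact rtg_coe (h u v) hu hvm

lemma rtg_of_subgraph_connected {X : G.Subgraph} (h : X.Connected) {u v : V}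
    (hu : u ∈ X.verts) (hv : v ∈ X.verts) : ReflTransGen X.Adj u v := by
  have hr := h.coe ⟨u, hu⟩ ⟨v, hv⟩
  rw [SimpleGraph.reachable_iff_reflTransGen] at hr
  exact Relation.ReflTransGen.lift (Subtype.val)
    (fun a b hab => by simpa using hab) _ _ hr

/-- The canonical minimum spanning subgraph: an edge is kept iff its endpoints are
not connected at the level of its own weight. -/
def mstSub (G : SimpleGraph V) (w : Sym2 V → ℕ) : G.Subgraph where
  verts := Set.univ
  Adj := fun x y => G.Adj x y ∧ ¬ ReflTransGen (srel (⊤ : G.Subgraph) w (w s(x, y))) x y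
  adj_sub := fun h => h.1
  edge_vert := fun _ => Set.mem_univ _
  symm := by
    refine ⟨?_⟩
    rintro x y ⟨h1, h2⟩
    refine ⟨h1.symm, ?_⟩
    rw [Sym2.eq_swap]
    exact fun hc => h2 ((@ReflTransGen.symmetric _ _ ⟨fun _ _ h => srel_symm _ _ _ h⟩).symm _ _ hc)

lemma mstSub_rtg (w : Sym2 V → ℕ) (lam : ℕ) :
    ∀ x y : V, ReflTransGen (srel (⊤ : G.Subgraph) w lam) x y →
      ReflTransGen (srel (mstSub G w) w lam) x y := by
  suffices h : ∀ n x y, G.Adj x y → w s(x, y) = n → ∀ lam, w s(x, y) < lam →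
      ReflTransGen (srel (mstSub G w) w lam) x y by
    intro x y hxy
    refine rtg_lift ?_ hxy
    rintro a b ⟨hab, hwab⟩
    exact h _ a b (by simpa using hab) rfl lam hwab
  intro n
  induction n using Nat.strong_induction_on with
  | _ n ih =>
    intro x y hxy hn lam hlt
    by_cases hmem : (mstSub G w).Adj x y
    · exact ReflTransGen.single ⟨hmem, hlt⟩
    · have hr : ReflTransGen (srel (⊤ : G.Subgraph) w (w s(x, y))) x y := by
        by_contra hc
        exact hmem ⟨hxy, hc⟩
      subst hn
      refine rtg_lift ?_ hr
      rintro a b ⟨hab, hwab⟩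
      exact ih _ hwab a b (by simpa using hab) rfl lam (hwab.trans hlt)

lemma top_rtg [Fintype G.edgeSet] (hG : G.Connected) {w : Sym2 V → ℕ}
    (hw : ∀ e ∈ G.edgeSet, w e < G.edgeFinset.card) :
    ∀ x y : V, ReflTransGen (srel (⊤ : G.Subgraph) w (G.edgeFinset.card + 1)) x y := by
  intro x y
  have h := hG.preconnected x y
  rw [SimpleGraph.reachable_iff_reflTransGen] at h
  refine rtg_lift ?_ h
  intro a b hab
  exact ReflTransGen.single ⟨by simpa using hab,
    Nat.lt_succ_of_lt (hw _ (G.mem_edgeSet.mpr hab))⟩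

end MSTAux

section MSTAux2

open Relation

variable {G : SimpleGraph V}

/-- Exchange lemma: in an MST, the endpoints of any edge of `G` are connected at
the level just above the edge's weight. -/
lemma mst_rtg [Fintype V] {w : Sym2 V → ℕ} {X : G.Subgraph}
    (hX : IsMST X w) {x y : V} (hxy : G.Adj x y) :
    ReflTransGen (srel X w (w s(x, y) + 1)) x y := by
  classical
  obtain ⟨hverts, hconn, hmin⟩ := hX
  by_cases hin : X.Adj x y
  · exact ReflTransGen.single ⟨hin, Nat.lt_succ_self _⟩
  by_contra hns
  set lam := w s(x, y) + 1 with hlam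
  set S : Set V := {v | ReflTransGen (srel X w lam) x v} with hS
  have hxS : x ∈ S := ReflTransGen.refl
  have hyS : y ∉ S := hns
  have hxyX : ReflTransGen X.Adj x y :=
    rtg_of_subgraph_connected hconn (hverts ▸ Set.mem_univ x) (hverts ▸ Set.mem_univ y)
  obtain ⟨a, b, haS, hbS, hab, hsuf⟩ := crossing hxyX hxS hyS
  have hwf : w s(x, y) < w s(a, b) := by
    by_contra hle
    push_neg at hle
    exact hbS (ReflTransGen.tail haS ⟨hab, Nat.lt_succ_of_le hle⟩)
  set Y : G.Subgraph := (X.deleteEdges {s(a, b)}) ⊔ G.subgraphOfAdj hxy with hY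
  have hYverts : Y.verts = Set.univ := by
    simp [hY, SimpleGraph.Subgraph.verts_sup, hverts]
  have hsmall : ∀ p q, srel X w lam p q → Y.Adj p q := by
    rintro p q ⟨hpq, hwpq⟩
    refine SimpleGraph.Subgraph.sup_adj.mpr (Or.inl ?_)
    rw [SimpleGraph.Subgraph.deleteEdges_adj]
    refine ⟨hpq, ?_⟩
    simp only [Set.mem_singleton_iff]
    intro hEq
    rw [hEq] at hwpq
    omega
  have hYxy : Y.Adj x y := SimpleGraph.Subgraph.sup_adj.mpr (Or.inr (by simp))
  have haxY : ReflTransGen Y.Adj x a :=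
    rtg_lift (fun p q h => ReflTransGen.single (hsmall p q h)) haS
  have hbyY : ReflTransGen Y.Adj b y := by
    refine rtg_lift ?_ hsuf
    rintro p q ⟨hpq, hpS, hqS⟩
    refine ReflTransGen.single (SimpleGraph.Subgraph.sup_adj.mpr (Or.inl ?_))
    rw [SimpleGraph.Subgraph.deleteEdges_adj]
    refine ⟨hpq, ?_⟩
    simp only [Set.mem_singleton_iff]
    intro hEq
    rcases Sym2.eq_iff.mp hEq with ⟨rfl, rfl⟩ | ⟨rfl, rfl⟩
    · exact hpS haS
    · exact hqS haS
  have hYsymm : Symmetric Y.Adj := fun _ _ h => h.symm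
  have habY : ReflTransGen Y.Adj a b :=
    ((@ReflTransGen.symmetric _ _ ⟨fun _ _ h => hYsymm h⟩).symm _ _ haxY).trans
      ((ReflTransGen.single hYxy).trans ((@ReflTransGen.symmetric _ _ ⟨fun _ _ h => hYsymm h⟩).symm _ _ hbyY))
  have hsim : ∀ u v : V, ReflTransGen X.Adj u v → ReflTransGen Y.Adj u v := by
    intro u v h
    refine rtg_lift ?_ h
    intro p q hpq
    by_cases hEq : s(p, q) = s(a, b)
    · rcases Sym2.eq_iff.mp hEq with ⟨rfl, rfl⟩ | ⟨rfl, rfl⟩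
      · exact habY
      · exact (@ReflTransGen.symmetric _ _ ⟨fun _ _ h => hYsymm h⟩).symm _ _ habY
    · refine ReflTransGen.single (SimpleGraph.Subgraph.sup_adj.mpr (Or.inl ?_))
      rw [SimpleGraph.Subgraph.deleteEdges_adj]
      exact ⟨hpq, by simpa using hEq⟩
  have hNE : Nonempty V := ⟨x⟩
  have hYconn : Y.Connected := by
    refine subgraph_connected_of_rtg hYverts fun u v => ?_
    exact hsim u v (rtg_of_subgraph_connected hconn (hverts ▸ Set.mem_univ u)
      (hverts ▸ Set.mem_univ v))
  -- weight comparison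
  have hE : Y.edgeSet = (X.edgeSet \ {s(a, b)}) ∪ {s(x, y)} := by
    ext e
    induction e using Sym2.ind with
    | _ p q =>
      simp only [SimpleGraph.Subgraph.mem_edgeSet, hY, SimpleGraph.Subgraph.sup_adj,
        SimpleGraph.Subgraph.deleteEdges_adj, Set.mem_union, Set.mem_diff,
        Set.mem_singleton_iff, SimpleGraph.subgraphOfAdj_adj, eq_comm]
  set A := (Set.toFinite X.edgeSet).toFinset with hA
  set B := (Set.toFinite Y.edgeSet).toFinset with hB
  have hfA : s(a, b) ∈ A := by
    rw [hA, Set.Finite.mem_toFinset]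
    exact SimpleGraph.Subgraph.mem_edgeSet.mpr hab
  have heA : s(x, y) ∉ A.erase (s(a, b)) := by
    intro hc
    have := Finset.mem_of_mem_erase hc
    rw [hA, Set.Finite.mem_toFinset] at this
    exact hin (SimpleGraph.Subgraph.mem_edgeSet.mp this)
  have hBeq : B = insert (s(x, y)) (A.erase (s(a, b))) := by
    ext e
    rw [hB, Set.Finite.mem_toFinset, hE]
    simp only [Set.mem_union, Set.mem_diff, Set.mem_singleton_iff, Finset.mem_insert,
      Finset.mem_erase, hA, Set.Finite.mem_toFinset]
    tauto
  have hlt : sgWeight Y w < sgWeight X w := by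
    have h1 : sgWeight Y w = w s(x, y) + ∑ e ∈ A.erase (s(a, b)), w e := by
      rw [sgWeight, ← hB, hBeq, Finset.sum_insert heA]
    have h2 : sgWeight X w = w s(a, b) + ∑ e ∈ A.erase (s(a, b)), w e := by
      rw [sgWeight, ← hA, ← Finset.add_sum_erase _ _ hfA]
    omega
  exact absurd (hmin Y hYverts hYconn) (not_le.mpr hlt)

lemma mst_Q [Fintype V] {w : Sym2 V → ℕ} {X : G.Subgraph} (hX : IsMST X w) :
    ∀ (lam : ℕ) (x y : V), ReflTransGen (srel (⊤ : G.Subgraph) w lam) x y →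
      ReflTransGen (srel X w lam) x y := by
  intro lam x y h
  refine rtg_lift ?_ h
  rintro a b ⟨hab, hwab⟩
  exact rtg_lift
    (fun p q hpq => ReflTransGen.single (srel_mono_lam (Nat.succ_le_of_lt hwab) p q hpq))
    (mst_rtg hX (by simpa using hab))

lemma mstSub_le {w : Sym2 V → ℕ} (hinj : Set.InjOn w G.edgeSet) {Y : G.Subgraph}
    (hYv : Y.verts = Set.univ)
    (hQ : ∀ (lam : ℕ) (x y : V), ReflTransGen (srel (⊤ : G.Subgraph) w lam) x y →
      ReflTransGen (srel Y w lam) x y) : mstSub G w ≤ Y := by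
  constructor
  · rw [hYv]; exact fun _ _ => trivial
  · rintro x y ⟨hxy, hnr⟩
    have h1 : ReflTransGen (srel Y w (w s(x, y) + 1)) x y :=
      hQ _ x y (ReflTransGen.single ⟨by simpa using hxy, Nat.lt_succ_self _⟩)
    by_contra hny
    apply hnr
    refine rtg_lift ?_ h1
    rintro p q ⟨hpq, hwpq⟩
    have hGpq : G.Adj p q := Y.adj_sub hpq
    have hlt : w s(p, q) < w s(x, y) := by
      rcases Nat.lt_succ_iff_lt_or_eq.mp hwpq with h | h
      · exact h
      · exfalso
        have heq : s(p, q) = s(x, y) :=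
          hinj (G.mem_edgeSet.mpr hGpq) (G.mem_edgeSet.mpr hxy) h
        rcases Sym2.eq_iff.mp heq with ⟨rfl, rfl⟩ | ⟨rfl, rfl⟩
        · exact hny hpq
        · exact hny hpq.symm
    exact ReflTransGen.single ⟨by simpa using hGpq, hlt⟩

lemma exists_mst [Fintype V] (hG : G.Connected) (w : Sym2 V → ℕ) :
    ∃ T : G.Subgraph, IsMST T w := by
  have hNE : Nonempty V := hG.nonempty
  have htopc : (⊤ : G.Subgraph).Connected := by
    refine subgraph_connected_of_rtg (by simp) fun u v => ?_
    have h := hG.preconnected u v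
    rw [SimpleGraph.reachable_iff_reflTransGen] at h
    exact rtg_lift (fun a b hab => ReflTransGen.single (by simpa using hab)) h
  have hne : {n | ∃ Z : G.Subgraph, Z.verts = Set.univ ∧ Z.Connected ∧ sgWeight Z w = n}.Nonempty :=
    ⟨sgWeight (⊤ : G.Subgraph) w, ⊤, by simp, htopc, rfl⟩
  obtain ⟨Z, hZv, hZc, hZw⟩ := Nat.sInf_mem hne
  exact ⟨Z, hZv, hZc, fun Y hYv hYc => hZw ▸ Nat.sInf_le ⟨Y, hYv, hYc, rfl⟩⟩

end MSTAux2

section MSTAux3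

open Relation

variable {G : SimpleGraph V}

lemma rtg_zero {w : Sym2 V → ℕ} {p q : V}
    (h : ReflTransGen (srel (⊤ : G.Subgraph) w 0) p q) : p = q := by
  induction h with
  | refl => rfl
  | tail _ hstep ih => exact absurd hstep.2 (Nat.not_lt_zero _)

lemma mstSub_connected [Fintype V] [Fintype G.edgeSet] (hG : G.Connected) {w : Sym2 V → ℕ}
    (hw : ∀ e ∈ G.edgeSet, w e < G.edgeFinset.card) : (mstSub G w).Connected := by
  have hNE : Nonempty V := hG.nonempty
  refine subgraph_connected_of_rtg rfl fun u v => ?_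
  exact rtg_lift (fun a b h => ReflTransGen.single h.1)
    (mstSub_rtg w _ u v (top_rtg hG hw u v))

lemma mst_eq_mstSub [Fintype V] [Fintype G.edgeSet] (hG : G.Connected) {w : Sym2 V → ℕ}
    (hinj : Set.InjOn w G.edgeSet) (hw : ∀ e ∈ G.edgeSet, w e < G.edgeFinset.card)
    {X : G.Subgraph} (hX : IsMST X w) : X = mstSub G w := by
  classical
  have hle : mstSub G w ≤ X := mstSub_le hinj hX.1 (mst_Q hX)
  have hMc := mstSub_connected hG hw
  have hsub : (Set.toFinite (mstSub G w).edgeSet).toFinset ⊆ (Set.toFinite X.edgeSet).toFinset :=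
    Set.Finite.toFinset_subset_toFinset.mpr (SimpleGraph.Subgraph.edgeSet_mono hle)
  have h1 : sgWeight (mstSub G w) w ≤ sgWeight X w := Finset.sum_le_sum_of_subset hsub
  have h2 : sgWeight X w ≤ sgWeight (mstSub G w) w := hX.2.2 _ rfl hMc
  set A := (Set.toFinite X.edgeSet).toFinset with hA
  set B := (Set.toFinite (mstSub G w).edgeSet).toFinset with hB
  have hsd := Finset.sum_sdiff (f := w) hsub
  have h0 : ∑ e ∈ A \ B, w e = 0 := by
    have e1 : sgWeight X w = ∑ e ∈ A, w e := rfl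
    have e2 : sgWeight (mstSub G w) w = ∑ e ∈ B, w e := rfl
    omega
  have hzero : ∀ p q, X.Adj p q → w s(p, q) = 0 → (mstSub G w).Adj p q := by
    intro p q hpq hw0
    refine ⟨X.adj_sub hpq, ?_⟩
    rw [hw0]
    exact fun hc => (X.adj_sub hpq).ne (rtg_zero hc)
  have hmem0 : ∀ e ∈ X.edgeSet, w e = 0 → e ∈ (mstSub G w).edgeSet := by
    intro e
    induction e using Sym2.ind with
    | _ p q =>
      intro heA he0
      exact SimpleGraph.Subgraph.mem_edgeSet.mpr
        (hzero p q (SimpleGraph.Subgraph.mem_edgeSet.mp heA) he0)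
  have hABempty : A \ B = ∅ := by
    rw [Finset.eq_empty_iff_forall_notMem]
    intro e he
    obtain ⟨heA, heB⟩ := Finset.mem_sdiff.mp he
    refine heB ?_
    rw [hB, Set.Finite.mem_toFinset]
    exact hmem0 e (by rwa [hA, Set.Finite.mem_toFinset] at heA)
      (Finset.sum_eq_zero_iff.mp h0 e he)
  have hAB : A = B :=
    Finset.Subset.antisymm (Finset.sdiff_eq_empty_iff_subset.mp hABempty) hsub
  have hEdge : X.edgeSet = (mstSub G w).edgeSet := Set.Finite.toFinset_inj.mp hAB
  refine SimpleGraph.Subgraph.ext (by rw [hX.1]; rfl) ?_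
  funext p q
  refine propext ?_
  rw [← SimpleGraph.Subgraph.mem_edgeSet, ← SimpleGraph.Subgraph.mem_edgeSet, hEdge]

end MSTAux3

/-- `X` is a MST of `(G, w)` iff its quasi-flat zones hierarchy
equals that of `G` and `X` is minimal (for the subgraph order) with this property. -/
theorem mst_iff_minimal_qfz [Fintype V] (G : SimpleGraph V) [Fintype G.edgeSet]
    (hG : G.Connected) (w : Sym2 V → ℕ) (hinj : Set.InjOn w G.edgeSet)
    (hw : ∀ e ∈ G.edgeSet, w e < G.edgeFinset.card) (X : G.Subgraph) :
    IsMST X w ↔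
      ((∀ lam : ℕ, levelPartition X w lam = levelPartition (⊤ : G.Subgraph) w lam) ∧
        ∀ Y : G.Subgraph, Y ≤ X →
          (∀ lam : ℕ, levelPartition Y w lam = levelPartition (⊤ : G.Subgraph) w lam) →
          Y = X) := by
  constructor
  · intro hX
    have hXeq : X = mstSub G w := mst_eq_mstSub hG hinj hw hX
    constructor
    · intro lam
      rw [levelPartition_eq_iff]
      refine ⟨hX.1, ?_⟩
      rw [hXeq]
      exact mstSub_rtg w lam
    · intro Y hYle hYlp
      have hYv : Y.verts = Set.univ := (levelPartition_eq_iff.mp (hYlp 0)).1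
      have hQY : ∀ (lam : ℕ) (x y : V),
          Relation.ReflTransGen (srel (⊤ : G.Subgraph) w lam) x y →
            Relation.ReflTransGen (srel Y w lam) x y :=
        fun lam => (levelPartition_eq_iff.mp (hYlp lam)).2
      have hle2 : mstSub G w ≤ Y := mstSub_le hinj hYv hQY
      exact le_antisymm hYle (by rw [hXeq]; exact hle2)
  · rintro ⟨h1, h2⟩
    have hXv : X.verts = Set.univ := (levelPartition_eq_iff.mp (h1 0)).1
    have hQX : ∀ (lam : ℕ) (x y : V),
        Relation.ReflTransGen (srel (⊤ : G.Subgraph) w lam) x y →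
          Relation.ReflTransGen (srel X w lam) x y :=
      fun lam => (levelPartition_eq_iff.mp (h1 lam)).2
    have hle : mstSub G w ≤ X := mstSub_le hinj hXv hQX
    have hXeq : mstSub G w = X :=
      h2 _ hle (fun lam => levelPartition_eq_iff.mpr ⟨rfl, mstSub_rtg w lam⟩)
    obtain ⟨T, hT⟩ := exists_mst hG w
    have hTle : mstSub G w ≤ T := mstSub_le hinj hT.1 (mst_Q hT)
    refine ⟨hXv, ?_, ?_⟩
    · rw [← hXeq]; exact mstSub_connected hG hw
    · intro Z hZv hZc
      calc sgWeight X w = sgWeight (mstSub G w) w := by rw [hXeq]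
        _ ≤ sgWeight T w := Finset.sum_le_sum_of_subset
            (Set.Finite.toFinset_subset_toFinset.mpr (SimpleGraph.Subgraph.edgeSet_mono hTle))
        _ ≤ sgWeight Z w := hT.2.2 Z hZv hZc
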